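/- If an irreducible finite family 𝒜 of d×d real matrices possesses at least one proper invariant cone, then it possesses a minimal invariant cone K_min: a proper invariant cone such that for every proper invariant cone K' of 𝒜, either K_min ⊆ K' or K_min ⊆ −K'. -/

import Mathlib

open Matrix Set

def IsProperCone {d : ℕ} (K : Set (Fin d → ℝ)) : Prop :=
  IsClosed K ∧ Convex ℝ K ∧ (∀ x ∈ K, ∀ t : ℝ, 0 ≤ t → t • x ∈ K) ∧
    K ∩ (-K) = {0} ∧ (interior K).Nonempty

def IsInvariantCone {d m : ℕ} (𝒜 : Fin m → Matrix (Fin d) (Fin d) ℝ)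
    (K : Set (Fin d → ℝ)) : Prop :=
  IsProperCone K ∧ ∀ i, ∀ x ∈ K, (𝒜 i).mulVec x ∈ K

def IsIrreducibleFamily {d m : ℕ} (𝒜 : Fin m → Matrix (Fin d) (Fin d) ℝ) : Prop :=
  ∀ V : Submodule ℝ (Fin d → ℝ), (∀ i, ∀ x ∈ V, (𝒜 i).mulVec x ∈ V) → V = ⊥ ∨ V = ⊤

variable {d m : ℕ} {𝒜 : Fin m → Matrix (Fin d) (Fin d) ℝ} {K : Set (Fin d → ℝ)}

lemma IsProperCone.closed (h : IsProperCone K) : IsClosed K := h.1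
lemma IsProperCone.convex (h : IsProperCone K) : Convex ℝ K := h.2.1
lemma IsProperCone.smul_mem (h : IsProperCone K) {x : Fin d → ℝ} (hx : x ∈ K) {t : ℝ}
    (ht : 0 ≤ t) : t • x ∈ K := h.2.2.1 x hx t ht
lemma IsProperCone.pointed (h : IsProperCone K) : K ∩ (-K) = {0} := h.2.2.2.1
lemma IsProperCone.int_nonempty (h : IsProperCone K) : (interior K).Nonempty := h.2.2.2.2

lemma IsProperCone.zero_mem (h : IsProperCone K) : (0 : Fin d → ℝ) ∈ K := by
  have : (0 : Fin d → ℝ) ∈ K ∩ (-K) := by rw [h.pointed]; rfl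
  exact this.1

lemma IsProperCone.eq_zero (h : IsProperCone K) {x : Fin d → ℝ} (hx : x ∈ K) (hx' : -x ∈ K) :
    x = 0 := by
  have : x ∈ K ∩ (-K) := ⟨hx, by simpa [Set.mem_neg] using hx'⟩
  rwa [h.pointed, Set.mem_singleton_iff] at this

lemma IsProperCone.add_mem (h : IsProperCone K) {x y : Fin d → ℝ} (hx : x ∈ K) (hy : y ∈ K) :
    x + y ∈ K := by
  have hmid : (1/2 : ℝ) • x + (1/2 : ℝ) • y ∈ K :=
    h.convex hx hy (by norm_num) (by norm_num) (by norm_num)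
  have := h.smul_mem hmid (t := 2) (by norm_num)
  rwa [smul_add, smul_smul, smul_smul, show (2:ℝ) * (1/2) = 1 by norm_num, one_smul,
    one_smul] at this

lemma IsProperCone.sum_mem (h : IsProperCone K) {ι : Type*} (s : Finset ι)
    {f : ι → Fin d → ℝ} (hf : ∀ i ∈ s, f i ∈ K) : (∑ i ∈ s, f i) ∈ K :=
  Finset.sum_induction f (· ∈ K) (fun _ _ ha hb => h.add_mem ha hb) h.zero_mem hf

/-- the sum operator of the family, as an endomorphism. -/
noncomputable def Bop (𝒜 : Fin m → Matrix (Fin d) (Fin d) ℝ) :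
    Module.End ℝ (Fin d → ℝ) := ∑ i, (𝒜 i).mulVecLin

lemma Bop_apply (x : Fin d → ℝ) : Bop 𝒜 x = ∑ i, (𝒜 i).mulVec x := by
  simp [Bop, LinearMap.sum_apply]

lemma Bop_cont : Continuous (Bop 𝒜) := (Bop 𝒜).continuous_of_finiteDimensional

lemma Bop_mem (hinv : IsInvariantCone 𝒜 K) {x : Fin d → ℝ} (hx : x ∈ K) :
    Bop 𝒜 x ∈ K := by
  rw [Bop_apply]
  exact hinv.1.sum_mem _ fun i _ => hinv.2 i x hx

lemma Bop_sub_single_mem (hinv : IsInvariantCone 𝒜 K) {x : Fin d → ℝ} (hx : x ∈ K) (i : Fin m) :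
    Bop 𝒜 x - (𝒜 i).mulVec x ∈ K := by
  have : Bop 𝒜 x = (𝒜 i).mulVec x + ∑ j ∈ Finset.univ.erase i, (𝒜 j).mulVec x := by
    rw [Bop_apply, ← Finset.add_sum_erase _ _ (Finset.mem_univ i)]
  rw [this, add_sub_cancel_left]
  exact hinv.1.sum_mem _ fun j _ => hinv.2 j x hx


lemma smul_mem_interior (h : IsProperCone K) {x : Fin d → ℝ} (hx : x ∈ interior K)
    {c : ℝ} (hc : 0 < c) : c • x ∈ interior K := by
  have hmap : IsOpenMap (fun y : Fin d → ℝ => c • y) := isOpenMap_smul₀ hc.ne'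
  refine mem_interior.2 ⟨(fun y => c • y) '' interior K, ?_, hmap _ isOpen_interior,
    ⟨x, hx, rfl⟩⟩
  rintro _ ⟨y, hy, rfl⟩
  exact h.smul_mem (interior_subset hy) hc.le

lemma zero_not_mem_interior (hd : 0 < d) (h : IsProperCone K) :
    (0 : Fin d → ℝ) ∉ interior K := by
  intro h0
  obtain ⟨r, hr, hball⟩ := Metric.isOpen_iff.1 isOpen_interior 0 h0
  obtain ⟨u, hu⟩ : ∃ u : Fin d → ℝ, u ≠ 0 :=
    ⟨fun _ => 1, fun hu => one_ne_zero (congrFun hu ⟨0, hd⟩)⟩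
  have hun : (0:ℝ) < ‖u‖ := norm_pos_iff.2 hu
  set w := (r / (2 * ‖u‖)) • u with hw
  have hwc : (0:ℝ) < r / (2 * ‖u‖) := by positivity
  have hwn : ‖w‖ = r / 2 := by
    rw [hw, norm_smul, Real.norm_eq_abs, abs_of_pos hwc]
    field_simp
  have hwK : w ∈ K := interior_subset <| hball <| by
    simp [Metric.mem_ball, dist_zero_right, hwn]; linarith
  have hwK' : -w ∈ K := interior_subset <| hball <| by
    simp [Metric.mem_ball, dist_zero_right, hwn]; linarith
  have : w = 0 := h.eq_zero hwK hwK'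
  exact (smul_ne_zero hwc.ne' hu) this

lemma span_eq_top_of_invariant (hirr : IsIrreducibleFamily 𝒜) {S : Set (Fin d → ℝ)}
    (hSinv : ∀ i, ∀ x ∈ S, (𝒜 i).mulVec x ∈ S) {v : Fin d → ℝ} (hv : v ∈ S) (hv0 : v ≠ 0) :
    Submodule.span ℝ S = ⊤ := by
  have hinv : ∀ i, ∀ x ∈ Submodule.span ℝ S, (𝒜 i).mulVec x ∈ Submodule.span ℝ S := by
    intro i x hx
    have hle : Submodule.span ℝ S ≤
        Submodule.comap ((𝒜 i).mulVecLin) (Submodule.span ℝ S) :=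
      Submodule.span_le.2 fun z hz => by
        simpa [Submodule.mem_comap] using Submodule.subset_span (hSinv i z hz)
    simpa [Submodule.mem_comap] using hle hx
  rcases hirr (Submodule.span ℝ S) hinv with h | h
  · exact absurd (h ▸ Submodule.subset_span hv) (by simp [hv0])
  · exact h

lemma interior_nonempty_of_span (hK : Convex ℝ K) (h0 : (0 : Fin d → ℝ) ∈ K)
    (hsp : Submodule.span ℝ K = ⊤) : (interior K).Nonempty := by
  rw [hK.interior_nonempty_iff_affineSpan_eq_top,
    AffineSubspace.affineSpan_eq_top_iff_vectorSpan_eq_top_of_nonempty ℝ (Fin d → ℝ) (Fin d → ℝ) ⟨0, h0⟩]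
  rw [eq_top_iff, ← hsp]
  exact Submodule.span_le.2 fun x hx => by
    simpa using vsub_mem_vectorSpan ℝ hx h0

lemma mem_interior_of_dom (hd : 0 < d) (h : IsProperCone K) {y : Fin d → ℝ} (hy : y ∈ K)
    (hdom : ∀ z : Fin d → ℝ, ∃ c : ℝ, 0 ≤ c ∧ c • y - z ∈ K) : y ∈ interior K := by
  classical
  have hdR : (0:ℝ) < (d:ℝ) := by exact_mod_cast hd
  set e : Fin d → (Fin d → ℝ) := fun j => Pi.single j 1 with he
  have hup : ∀ (z : Fin d → ℝ) (c c' : ℝ), 0 ≤ c → c • y - z ∈ K → c ≤ c' →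
      c' • y - z ∈ K := by
    intro z c c' hc hk hcc
    have h1 : (c' - c) • y ∈ K := h.smul_mem hy (by linarith)
    have := h.add_mem h1 hk
    rwa [show (c' - c) • y + (c • y - z) = c' • y - z by module] at this
  choose cp hcp0 hcp using fun j => hdom (e j)
  choose cm hcm0 hcm using fun j => hdom (-(e j))
  set c₀ : ℝ := 1 + ∑ j, (cp j + cm j) with hc₀
  have hsum0 : (0:ℝ) ≤ ∑ j, (cp j + cm j) :=
    Finset.sum_nonneg fun j _ => add_nonneg (hcp0 j) (hcm0 j)
  have hc₀0 : (0:ℝ) < c₀ := by rw [hc₀]; linarith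
  have hbd : ∀ j, cp j ≤ c₀ ∧ cm j ≤ c₀ := by
    intro j
    have h1 : cp j + cm j ≤ ∑ i, (cp i + cm i) :=
      Finset.single_le_sum (f := fun i => cp i + cm i)
        (fun i _ => add_nonneg (hcp0 i) (hcm0 i)) (Finset.mem_univ j)
    constructor
    · rw [hc₀]; linarith [hcm0 j]
    · rw [hc₀]; linarith [hcp0 j]
  have hyp : ∀ j, y + c₀⁻¹ • e j ∈ K := by
    intro j
    have h1 := hup _ _ _ (hcm0 j) (hcm j) (hbd j).2
    have h2 := h.smul_mem h1 (t := c₀⁻¹) (by positivity)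
    rwa [show c₀⁻¹ • (c₀ • y - -e j) = y + c₀⁻¹ • e j from by
      rw [smul_sub, smul_smul, inv_mul_cancel₀ hc₀0.ne', one_smul, smul_neg, sub_neg_eq_add]] at h2
  have hym : ∀ j, y - c₀⁻¹ • e j ∈ K := by
    intro j
    have h1 := hup _ _ _ (hcp0 j) (hcp j) (hbd j).1
    have h2 := h.smul_mem h1 (t := c₀⁻¹) (by positivity)
    rwa [show c₀⁻¹ • (c₀ • y - e j) = y - c₀⁻¹ • e j from by
      rw [smul_sub, smul_smul, inv_mul_cancel₀ hc₀0.ne', one_smul]] at h2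
  have hseg : ∀ j (s : ℝ), |s| ≤ 1 → y + (s * c₀⁻¹) • e j ∈ K := by
    intro j s hs
    have habs := abs_le.1 hs
    have ha : (0:ℝ) ≤ (1 + s)/2 := by linarith [habs.1]
    have hb : (0:ℝ) ≤ (1 - s)/2 := by linarith [habs.2]
    have hab : (1 + s)/2 + (1 - s)/2 = 1 := by ring
    have hc := h.convex (hyp j) (hym j) ha hb hab
    rwa [show ((1+s)/2) • (y + c₀⁻¹ • e j) + ((1-s)/2) • (y - c₀⁻¹ • e j)
        = y + (s * c₀⁻¹) • e j from by module] at hc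
  set δ : ℝ := c₀⁻¹ / d with hδ
  have hδ0 : 0 < δ := by rw [hδ]; positivity
  refine mem_interior.2 ⟨{x | ∀ j, |x j - y j| < δ}, ?_, ?_, ?_⟩
  · intro x hx
    simp only [Set.mem_setOf_eq] at hx
    have hxmem : ∀ j, y + ((d:ℝ) * (x j - y j)) • e j ∈ K := by
      intro j
      have h1 : |(d:ℝ) * (x j - y j) * c₀| ≤ 1 := by
        rw [abs_mul, abs_mul, abs_of_pos hdR, abs_of_pos hc₀0]
        have h2 := (hx j).le
        have h3 : (d:ℝ) * |x j - y j| * c₀ ≤ (d:ℝ) * δ * c₀ := by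
          have := hc₀0.le
          gcongr
        have h4 : (d:ℝ) * δ * c₀ = 1 := by
          rw [hδ]; field_simp
        linarith
      have h5 := hseg j ((d:ℝ) * (x j - y j) * c₀) h1
      rwa [show ((d:ℝ) * (x j - y j) * c₀) * c₀⁻¹ = (d:ℝ) * (x j - y j) from by
        field_simp] at h5
    have hcomb := h.convex.sum_mem (t := Finset.univ) (w := fun _ : Fin d => (d:ℝ)⁻¹)
      (z := fun j => y + ((d:ℝ) * (x j - y j)) • e j)
      (fun i _ => by positivity)
      (by rw [Finset.sum_const, Finset.card_univ, Fintype.card_fin, nsmul_eq_mul,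
        mul_inv_cancel₀ hdR.ne'])
      (fun j _ => hxmem j)
    have hid : ∑ j, (d:ℝ)⁻¹ • (y + ((d:ℝ) * (x j - y j)) • e j) = x := by
      funext k
      rw [Finset.sum_apply]
      simp only [Pi.smul_apply, Pi.add_apply, smul_eq_mul, he, Pi.single_apply, mul_ite,
        mul_one, mul_zero, mul_add, Finset.sum_add_distrib, Finset.sum_const,
        Finset.card_univ, Fintype.card_fin, nsmul_eq_mul, Finset.sum_ite_eq,
        Finset.mem_univ, if_true]
      field_simp
      ring
    rwa [hid] at hcomb
  · rw [show {x : Fin d → ℝ | ∀ j, |x j - y j| < δ}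
        = ⋂ j, {x : Fin d → ℝ | |x j - y j| < δ} from by ext x; simp]
    exact isOpen_iInter_of_finite fun j =>
      isOpen_lt (((continuous_apply j).sub continuous_const).abs) continuous_const
  · simp [hδ0]

noncomputable def Lop (𝒜 : Fin m → Matrix (Fin d) (Fin d) ℝ) : Module.End ℝ (Fin d → ℝ) :=
  1 + Bop 𝒜

lemma Lop_apply (x : Fin d → ℝ) : Lop 𝒜 x = x + Bop 𝒜 x := by
  simp [Lop, LinearMap.add_apply]

lemma Lop_pow_succ (n : ℕ) (x : Fin d → ℝ) :
    (Lop 𝒜 ^ (n+1)) x = (Lop 𝒜 ^ n) x + Bop 𝒜 ((Lop 𝒜 ^ n) x) := by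
  rw [pow_succ', Module.End.mul_apply, Lop_apply]

lemma Lop_pow_mem (hinv : IsInvariantCone 𝒜 K) {x : Fin d → ℝ} (hx : x ∈ K) (hx0 : x ≠ 0)
    (n : ℕ) : (Lop 𝒜 ^ n) x ∈ K ∧ (Lop 𝒜 ^ n) x ≠ 0 := by
  induction n with
  | zero => simpa using ⟨hx, hx0⟩
  | succ n ih =>
    rw [Lop_pow_succ]
    refine ⟨hinv.1.add_mem ih.1 (Bop_mem hinv ih.1), ?_⟩
    intro hcon
    have hB : Bop 𝒜 ((Lop 𝒜 ^ n) x) = -((Lop 𝒜 ^ n) x) :=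
      eq_neg_of_add_eq_zero_right hcon
    have h1 : Bop 𝒜 ((Lop 𝒜 ^ n) x) ∈ K := Bop_mem hinv ih.1
    have h2 : -(Bop 𝒜 ((Lop 𝒜 ^ n) x)) ∈ K := by rw [hB, neg_neg]; exact ih.1
    have := hinv.1.eq_zero h1 h2
    rw [hB, neg_eq_zero] at this
    exact ih.2 this

lemma Lop_pow_eigen {v : Fin d → ℝ} {lam : ℝ} (hv : Bop 𝒜 v = lam • v) (n : ℕ) :
    (Lop 𝒜 ^ n) v = ((1 + lam) ^ n) • v := by
  induction n with
  | zero => simp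
  | succ n ih =>
    rw [Lop_pow_succ, ih, _root_.map_smul, hv, smul_smul, pow_succ]
    module

def Fset (𝒜 : Fin m → Matrix (Fin d) (Fin d) ℝ) (K : Set (Fin d → ℝ)) (y : Fin d → ℝ) :
    Set (Fin d → ℝ) := {z | z ∈ K ∧ ∃ c : ℝ, 0 ≤ c ∧ c • y - z ∈ K}

lemma self_mem_Fset (hK : IsProperCone K) {y : Fin d → ℝ} (hy : y ∈ K) :
    y ∈ Fset 𝒜 K y := ⟨hy, 1, zero_le_one, by simp [hK.zero_mem]⟩

lemma zero_mem_Fset (hK : IsProperCone K) {y : Fin d → ℝ} :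
    (0 : Fin d → ℝ) ∈ Fset 𝒜 K y := ⟨hK.zero_mem, 0, le_refl _, by simp [hK.zero_mem]⟩

lemma Fset_add (hK : IsProperCone K) {y z₁ z₂ : Fin d → ℝ} (h1 : z₁ ∈ Fset 𝒜 K y)
    (h2 : z₂ ∈ Fset 𝒜 K y) : z₁ + z₂ ∈ Fset 𝒜 K y := by
  obtain ⟨hz1, c1, hc1, hk1⟩ := h1
  obtain ⟨hz2, c2, hc2, hk2⟩ := h2
  refine ⟨hK.add_mem hz1 hz2, c1 + c2, by linarith, ?_⟩
  have := hK.add_mem hk1 hk2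
  rwa [show (c1 • y - z₁) + (c2 • y - z₂) = (c1 + c2) • y - (z₁ + z₂) by module] at this

lemma Fset_smul (hK : IsProperCone K) {y z : Fin d → ℝ} (h1 : z ∈ Fset 𝒜 K y) {t : ℝ}
    (ht : 0 ≤ t) : t • z ∈ Fset 𝒜 K y := by
  obtain ⟨hz, c, hc, hk⟩ := h1
  refine ⟨hK.smul_mem hz ht, t * c, mul_nonneg ht hc, ?_⟩
  have := hK.smul_mem hk ht
  rwa [show t • (c • y - z) = (t * c) • y - t • z by module] at this

lemma exists_dom_of_mem_span (hK : IsProperCone K) {y z : Fin d → ℝ} (hy : y ∈ K)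
    (hz : z ∈ Submodule.span ℝ (Fset 𝒜 K y)) : ∃ c : ℝ, 0 ≤ c ∧ c • y - z ∈ K := by
  have hH : z ∈ {w | ∃ a ∈ Fset 𝒜 K y, ∃ b ∈ Fset 𝒜 K y, w = a - b} := by
    refine Submodule.span_induction ?_ ?_ ?_ ?_ hz
    · exact fun x hx => ⟨x, hx, 0, zero_mem_Fset hK, by simp⟩
    · exact ⟨0, zero_mem_Fset hK, 0, zero_mem_Fset hK, by simp⟩
    · rintro x₁ x₂ - - ⟨a1, ha1, b1, hb1, rfl⟩ ⟨a2, ha2, b2, hb2, rfl⟩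
      exact ⟨a1 + a2, Fset_add hK ha1 ha2, b1 + b2, Fset_add hK hb1 hb2, by abel⟩
    · rintro t x - ⟨a, ha, b, hb, rfl⟩
      rcases le_total 0 t with htt | htt
      · exact ⟨t • a, Fset_smul hK ha htt, t • b, Fset_smul hK hb htt, by module⟩
      · exact ⟨(-t) • b, Fset_smul hK hb (by linarith), (-t) • a,
          Fset_smul hK ha (by linarith), by module⟩
  obtain ⟨a, ⟨haK, ca, hca, hcak⟩, b, ⟨hbK, -⟩, rfl⟩ := hH
  refine ⟨ca, hca, ?_⟩
  have := hK.add_mem hcak hbK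
  rwa [show (ca • y - a) + b = ca • y - (a - b) by module] at this

lemma mem_interior_of_dominates (hd : 0 < d) (hirr : IsIrreducibleFamily 𝒜)
    (hinv : IsInvariantCone 𝒜 K) {y : Fin d → ℝ} (hy : y ∈ K) (hy0 : y ≠ 0)
    {c₀ : ℝ} (hc₀ : 0 ≤ c₀) (hdom : c₀ • y - Bop 𝒜 y ∈ K) : y ∈ interior K := by
  have hK := hinv.1
  have hFinv : ∀ i, ∀ z ∈ Fset 𝒜 K y, (𝒜 i).mulVec z ∈ Fset 𝒜 K y := by
    rintro i z ⟨hzK, c, hc, hck⟩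
    refine ⟨hinv.2 i z hzK, c * c₀, mul_nonneg hc hc₀, ?_⟩
    have h1 : c • (c₀ • y - Bop 𝒜 y) ∈ K := hK.smul_mem hdom hc
    have h2 : Bop 𝒜 (c • y - z) ∈ K := Bop_mem hinv hck
    have h3 : Bop 𝒜 z - (𝒜 i).mulVec z ∈ K := Bop_sub_single_mem hinv hzK i
    have h4 := hK.add_mem (hK.add_mem h1 h2) h3
    have hB : Bop 𝒜 (c • y - z) = c • Bop 𝒜 y - Bop 𝒜 z := by
      rw [map_sub, _root_.map_smul]
    rw [hB] at h4
    rwa [show c • (c₀ • y - Bop 𝒜 y) + (c • Bop 𝒜 y - Bop 𝒜 z) + (Bop 𝒜 z - (𝒜 i).mulVec z)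
        = (c * c₀) • y - (𝒜 i).mulVec z by module] at h4
  have hsp : Submodule.span ℝ (Fset 𝒜 K y) = ⊤ :=
    span_eq_top_of_invariant hirr hFinv (self_mem_Fset hK hy) hy0
  refine mem_interior_of_dom hd hK hy fun z => ?_
  exact exists_dom_of_mem_span hK hy (by rw [hsp]; trivial)

lemma exists_pow_mem_interior (hd : 0 < d) (hirr : IsIrreducibleFamily 𝒜)
    (hinv : IsInvariantCone 𝒜 K) {y : Fin d → ℝ} (hy : y ∈ K) (hy0 : y ≠ 0) :
    ∃ n : ℕ, (Lop 𝒜 ^ n) y ∈ interior K := by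
  have hK := hinv.1
  set ys : ℕ → (Fin d → ℝ) := fun n => (Lop 𝒜 ^ n) y with hys
  have hysK : ∀ n, ys n ∈ K ∧ ys n ≠ 0 := fun n => Lop_pow_mem hinv hy hy0 n
  have hrec : ∀ n, ys (n+1) = ys n + Bop 𝒜 (ys n) := fun n => Lop_pow_succ n y
  have hmono : ∀ n, Fset 𝒜 K (ys n) ⊆ Fset 𝒜 K (ys (n+1)) := by
    rintro n z ⟨hzK, c, hc, hk⟩
    refine ⟨hzK, c, hc, ?_⟩
    have h1 : c • Bop 𝒜 (ys n) ∈ K := hK.smul_mem (Bop_mem hinv (hysK n).1) hc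
    have h2 := hK.add_mem hk h1
    rw [hrec n]
    rwa [show (c • ys n - z) + c • Bop 𝒜 (ys n)
        = c • (ys n + Bop 𝒜 (ys n)) - z by module] at h2
  set Lmod : ℕ → Submodule ℝ (Fin d → ℝ) := fun n => Submodule.span ℝ (Fset 𝒜 K (ys n))
    with hLmod
  have hLmono : ∀ n, Lmod n ≤ Lmod (n+1) := fun n => Submodule.span_mono (hmono n)
  have hex : ∃ n, Lmod n = Lmod (n+1) := by
    by_contra hcon
    push_neg at hcon
    have hstep : ∀ n, n ≤ Module.finrank ℝ (Lmod n) := by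
      intro n
      induction n with
      | zero => exact Nat.zero_le _
      | succ n ih =>
        have h1 : Module.finrank ℝ (Lmod n) < Module.finrank ℝ (Lmod (n+1)) :=
          Submodule.finrank_lt_finrank_of_lt (lt_of_le_of_ne (hLmono n) (hcon n))
        omega
    have h2 := hstep (d+1)
    have h3 : Module.finrank ℝ (Lmod (d+1)) ≤ d := by
      have := Submodule.finrank_le (Lmod (d+1))
      simpa [Module.finrank_fin_fun] using this
    omega
  obtain ⟨n, hn⟩ := hex
  have hBmem : Bop 𝒜 (ys n) ∈ Lmod n := by
    rw [hn]
    apply Submodule.subset_span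
    refine ⟨Bop_mem hinv (hysK n).1, 1, zero_le_one, ?_⟩
    rw [hrec n]
    simpa using (hysK n).1
  obtain ⟨c, hc, hdom⟩ := exists_dom_of_mem_span hK (hysK n).1 hBmem
  exact ⟨n, mem_interior_of_dominates hd hirr hinv (hysK n).1 (hysK n).2 hc hdom⟩

lemma norm_inv_smul_mem_sphere {x : Fin d → ℝ} (hx0 : x ≠ 0) :
    ‖x‖⁻¹ • x ∈ Metric.sphere (0 : Fin d → ℝ) 1 := by
  have h : (0:ℝ) < ‖x‖ := norm_pos_iff.2 hx0
  simp [Metric.mem_sphere, dist_zero_right, norm_smul, abs_of_pos (inv_pos.2 h),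
    inv_mul_cancel₀ h.ne']

lemma exists_eigenvector (hd : 0 < d) (hirr : IsIrreducibleFamily 𝒜)
    (hinv : IsInvariantCone 𝒜 K) :
    ∃ (v : Fin d → ℝ) (lam : ℝ), v ∈ K ∧ v ≠ 0 ∧ 0 ≤ lam ∧ Bop 𝒜 v = lam • v := by
  have hK := hinv.1
  set S : Set (Fin d → ℝ) := K ∩ Metric.sphere 0 1 with hS
  have hScp : IsCompact S := (isCompact_sphere 0 1).inter_left hK.closed
  obtain ⟨q, hq⟩ := hK.int_nonempty
  have hq0 : q ≠ 0 := fun h => zero_not_mem_interior hd hK (h ▸ hq)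
  have hqK : q ∈ K := interior_subset hq
  have hnorm : ∀ x : Fin d → ℝ, x ∈ K → x ≠ 0 → ‖x‖⁻¹ • x ∈ S := fun x hx hx0 =>
    ⟨hK.smul_mem hx (inv_nonneg.2 (norm_nonneg x)), norm_inv_smul_mem_sphere hx0⟩
  have hSnorm1 : ∀ x ∈ S, x ≠ 0 := by
    rintro x ⟨-, hx⟩ rfl
    simp [Metric.mem_sphere, dist_zero_right] at hx
  set Λ : Set ℝ := {lam : ℝ | 0 ≤ lam ∧ ∃ x ∈ S, Bop 𝒜 x - lam • x ∈ K} with hΛ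
  have h0Λ : (0:ℝ) ∈ Λ :=
    ⟨le_refl _, _, hnorm q hqK hq0, by
      simpa using Bop_mem hinv (hnorm q hqK hq0).1⟩
  have hΛne : Λ.Nonempty := ⟨0, h0Λ⟩
  have hbdd : BddAbove Λ := by
    by_contra hcon
    rw [not_bddAbove_iff] at hcon
    have hcon' : ∀ n : ℕ, ∃ lam ∈ Λ, (n:ℝ) < lam := fun n => hcon n
    choose lam hlamΛ hlamgt using hcon'
    have hlampos : ∀ n, (0:ℝ) < lam n := fun n =>
      lt_of_le_of_lt (Nat.cast_nonneg n) (hlamgt n)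
    choose x hxS hxK using fun n => (hlamΛ n).2
    obtain ⟨xbar, hxbarS, φ, hφ, hconv⟩ := hScp.tendsto_subseq hxS
    have huK : ∀ n, (lam n)⁻¹ • (Bop 𝒜 (x n) - lam n • x n) ∈ K := fun n =>
      hK.smul_mem (hxK n) (inv_nonneg.2 (hlampos n).le)
    have hueq : ∀ n, (lam n)⁻¹ • (Bop 𝒜 (x n) - lam n • x n)
        = (lam n)⁻¹ • Bop 𝒜 (x n) - x n := by
      intro n
      rw [smul_sub, smul_smul, inv_mul_cancel₀ (hlampos n).ne', one_smul]
    have hinvten : Filter.Tendsto (fun k => (lam (φ k))⁻¹) Filter.atTop (nhds 0) := by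
      apply tendsto_of_tendsto_of_tendsto_of_le_of_le' tendsto_const_nhds
        tendsto_inv_atTop_nhds_zero_nat
      · exact Filter.Eventually.of_forall fun k => (inv_nonneg.2 (hlampos (φ k)).le)
      · filter_upwards [Filter.eventually_ge_atTop 1] with k hk
        apply inv_anti₀
        · exact_mod_cast Nat.lt_of_lt_of_le Nat.zero_lt_one hk
        · have h1 : (k:ℝ) ≤ (φ k : ℝ) := by exact_mod_cast hφ.le_apply
          have h2 := hlamgt (φ k)
          linarith
    have hBten : Filter.Tendsto (fun k => Bop 𝒜 (x (φ k))) Filter.atTop (nhds (Bop 𝒜 xbar)) :=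
      (Bop_cont.tendsto xbar).comp hconv
    have hten : Filter.Tendsto (fun k => (lam (φ k))⁻¹ • Bop 𝒜 (x (φ k)) - x (φ k))
        Filter.atTop (nhds (-xbar)) := by
      have := (hinvten.smul hBten).sub hconv
      simpa using this
    have hneg : -xbar ∈ K := by
      refine hK.closed.mem_of_tendsto hten (Filter.Eventually.of_forall fun k => ?_)
      rw [← hueq (φ k)]
      exact huK (φ k)
    have : xbar = 0 := hK.eq_zero hxbarS.1 hneg
    exact hSnorm1 xbar hxbarS this
  set lam0 : ℝ := sSup Λ with hlam0
  have hlam00 : 0 ≤ lam0 := le_csSup hbdd h0Λ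
  -- attainment
  have hseq : ∀ n : ℕ, ∃ lam ∈ Λ, lam0 - 1/((n:ℝ)+1) < lam := by
    intro n
    apply exists_lt_of_lt_csSup hΛne
    have : (0:ℝ) < 1/((n:ℝ)+1) := by positivity
    linarith
  choose lam hlamΛ hlamgt using hseq
  have hlamle : ∀ n, lam n ≤ lam0 := fun n => le_csSup hbdd (hlamΛ n)
  choose x hxS hxK using fun n => (hlamΛ n).2
  obtain ⟨xbar, hxbarS, φ, hφ, hconv⟩ := hScp.tendsto_subseq hxS
  have hlamten : Filter.Tendsto (fun k => lam (φ k)) Filter.atTop (nhds lam0) := by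
    have hlow : Filter.Tendsto (fun k : ℕ => lam0 - 1/((k:ℝ)+1)) Filter.atTop (nhds lam0) := by
      have := Filter.Tendsto.const_sub lam0 tendsto_one_div_add_atTop_nhds_zero_nat
      simpa using this
    apply tendsto_of_tendsto_of_tendsto_of_le_of_le' hlow tendsto_const_nhds
    · apply Filter.Eventually.of_forall
      intro k
      have h1 : 1/((φ k : ℝ)+1) ≤ 1/((k:ℝ)+1) := by
        apply one_div_le_one_div_of_le
        · positivity
        · have : (k:ℝ) ≤ (φ k : ℝ) := by exact_mod_cast hφ.le_apply
          linarith
      have := hlamgt (φ k)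
      linarith
    · exact Filter.Eventually.of_forall fun k => hlamle (φ k)
  have hyK : Bop 𝒜 xbar - lam0 • xbar ∈ K := by
    have hten : Filter.Tendsto (fun k => Bop 𝒜 (x (φ k)) - lam (φ k) • x (φ k))
        Filter.atTop (nhds (Bop 𝒜 xbar - lam0 • xbar)) :=
      (((Bop_cont.tendsto xbar).comp hconv).sub (hlamten.smul hconv))
    exact hK.closed.mem_of_tendsto hten
      (Filter.Eventually.of_forall fun k => hxK (φ k))
  by_cases hy0 : Bop 𝒜 xbar - lam0 • xbar = 0
  · exact ⟨xbar, lam0, hxbarS.1, hSnorm1 xbar hxbarS, hlam00, sub_eq_zero.1 hy0⟩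
  exfalso
  obtain ⟨n, hz⟩ := exists_pow_mem_interior hd hirr hinv hyK hy0
  set w : Fin d → ℝ := (Lop 𝒜 ^ n) xbar with hw
  obtain ⟨hwK, hw0⟩ := Lop_pow_mem hinv hxbarS.1 (hSnorm1 xbar hxbarS) n
  have hcomm : Bop 𝒜 * (Lop 𝒜 ^ n) = (Lop 𝒜 ^ n) * Bop 𝒜 := by
    have h1 : Commute (Bop 𝒜) (Lop 𝒜) := by
      rw [Lop]
      exact (Commute.one_right (Bop 𝒜)).add_right (Commute.refl _)
    exact (h1.pow_right n).eq
  have hzeq : (Lop 𝒜 ^ n) (Bop 𝒜 xbar - lam0 • xbar) = Bop 𝒜 w - lam0 • w := by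
    rw [map_sub, _root_.map_smul, hw]
    congr 1
    rw [← Module.End.mul_apply, ← hcomm, Module.End.mul_apply]
  rw [hzeq] at hz
  have hwn : (0:ℝ) < ‖w‖ := norm_pos_iff.2 hw0
  set x' : Fin d → ℝ := ‖w‖⁻¹ • w with hx'
  have hx'S : x' ∈ S := hnorm w hwK hw0
  set p : Fin d → ℝ := ‖w‖⁻¹ • (Bop 𝒜 w - lam0 • w) with hp
  have hpint : p ∈ interior K := smul_mem_interior hK hz (inv_pos.2 hwn)
  have hpeq : Bop 𝒜 x' - lam0 • x' = p := by
    rw [hx', hp, _root_.map_smul]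
    module
  obtain ⟨r, hr, hball⟩ := Metric.isOpen_iff.1 isOpen_interior p hpint
  set ε : ℝ := r / (2 * (‖x'‖ + 1)) with hε
  have hε0 : 0 < ε := by
    have := norm_nonneg x'
    rw [hε]; positivity
  have hεx : ‖ε • x'‖ < r := by
    rw [norm_smul, Real.norm_eq_abs, abs_of_pos hε0, hε]
    rw [div_mul_eq_mul_div, div_lt_iff₀ (by positivity)]
    nlinarith [norm_nonneg x']
  have hmem : Bop 𝒜 x' - (lam0 + ε) • x' ∈ K := by
    have h1 : Bop 𝒜 x' - (lam0 + ε) • x' = p - ε • x' := by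
      rw [← hpeq]; module
    rw [h1]
    refine interior_subset (hball ?_)
    rw [Metric.mem_ball, dist_eq_norm]
    simpa using hεx
  have : lam0 + ε ∈ Λ := ⟨by linarith, x', hx'S, hmem⟩
  have := le_csSup hbdd this
  linarith

lemma no_disjoint_aux (hd : 0 < d) (hirr : IsIrreducibleFamily 𝒜) {K1 K2 : Set (Fin d → ℝ)}
    (h1 : IsInvariantCone 𝒜 K1) (h2 : IsInvariantCone 𝒜 K2)
    (hA : K1 ∩ K2 = {0}) (hB : K1 ∩ (-K2) = {0})
    {v1 v2 : Fin d → ℝ} {lam1 lam2 : ℝ}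
    (hv1K : v1 ∈ K1) (hv10 : v1 ≠ 0) (hlam1 : 0 ≤ lam1) (hev1 : Bop 𝒜 v1 = lam1 • v1)
    (hv2K : v2 ∈ K2) (hv20 : v2 ≠ 0) (hlam2 : 0 ≤ lam2) (hev2 : Bop 𝒜 v2 = lam2 • v2)
    (hle : lam1 ≤ lam2) : False := by
  have hK1 := h1.1
  have hK2 := h2.1
  -- v1 is interior
  have hv1int : v1 ∈ interior K1 :=
    mem_interior_of_dominates hd hirr h1 hv1K hv10 hlam1 (by rw [hev1]; simpa using hK1.zero_mem)
  set T : Set ℝ := {t : ℝ | 0 ≤ t ∧ v1 - t • v2 ∈ K1} with hT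
  have h0T : (0:ℝ) ∈ T := ⟨le_refl _, by simpa using hv1K⟩
  have hTne : T.Nonempty := ⟨0, h0T⟩
  have hbdd : BddAbove T := by
    by_contra hcon
    rw [not_bddAbove_iff] at hcon
    have hcon' : ∀ n : ℕ, ∃ t ∈ T, (n:ℝ) < t := fun n => hcon n
    choose t htT htgt using hcon'
    have htpos : ∀ n, (0:ℝ) < t n := fun n =>
      lt_of_le_of_lt (Nat.cast_nonneg n) (htgt n)
    have hmem : ∀ n, (t n)⁻¹ • v1 - v2 ∈ K1 := by
      intro n
      have := hK1.smul_mem (htT n).2 (inv_nonneg.2 (htpos n).le)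
      rwa [smul_sub, smul_smul, inv_mul_cancel₀ (htpos n).ne', one_smul] at this
    have hinvten : Filter.Tendsto (fun n => (t n)⁻¹) Filter.atTop (nhds 0) := by
      apply tendsto_of_tendsto_of_tendsto_of_le_of_le' tendsto_const_nhds
        tendsto_inv_atTop_nhds_zero_nat
      · exact Filter.Eventually.of_forall fun n => (inv_nonneg.2 (htpos n).le)
      · filter_upwards [Filter.eventually_ge_atTop 1] with n hn
        apply inv_anti₀
        · exact_mod_cast Nat.lt_of_lt_of_le Nat.zero_lt_one hn
        · exact (htgt n).le
    have hten : Filter.Tendsto (fun n => (t n)⁻¹ • v1 - v2) Filter.atTop (nhds (-v2)) := by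
      have := (hinvten.smul_const v1).sub_const v2
      simpa using this
    have hneg : -v2 ∈ K1 :=
      hK1.closed.mem_of_tendsto hten (Filter.Eventually.of_forall hmem)
    have : -v2 ∈ K1 ∩ (-K2) := ⟨hneg, by simpa [Set.mem_neg] using hv2K⟩
    rw [hB, Set.mem_singleton_iff, neg_eq_zero] at this
    exact hv20 this
  have hTcl : IsClosed T := by
    have h1c : IsClosed {t : ℝ | 0 ≤ t} := isClosed_Ici
    have h2c : IsClosed {t : ℝ | v1 - t • v2 ∈ K1} :=
      IsClosed.preimage (by continuity) hK1.closed
    exact h1c.inter h2c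
  set t0 : ℝ := sSup T with ht0
  have ht0T : t0 ∈ T := hTcl.csSup_mem hTne hbdd
  have ht00 : 0 ≤ t0 := ht0T.1
  -- t0 > 0
  have ht0pos : 0 < t0 := by
    obtain ⟨r, hr, hball⟩ := Metric.isOpen_iff.1 isOpen_interior v1 hv1int
    set τ : ℝ := r / (2 * (‖v2‖ + 1)) with hτ
    have hτ0 : 0 < τ := by rw [hτ]; positivity
    have hτT : τ ∈ T := by
      refine ⟨hτ0.le, interior_subset (hball ?_)⟩
      rw [Metric.mem_ball, dist_eq_norm]
      have : ‖v1 - τ • v2 - v1‖ = τ * ‖v2‖ := by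
        rw [show v1 - τ • v2 - v1 = -(τ • v2) by abel, norm_neg, norm_smul,
          Real.norm_eq_abs, abs_of_pos hτ0]
      rw [this, hτ]
      rw [div_mul_eq_mul_div, div_lt_iff₀ (by positivity)]
      nlinarith [norm_nonneg v2]
    exact lt_of_lt_of_le hτ0 (le_csSup hbdd hτT)
  set y : Fin d → ℝ := v1 - t0 • v2 with hy
  have hyK : y ∈ K1 := ht0T.2
  have hy0 : y ≠ 0 := by
    intro hcon
    have : v1 = t0 • v2 := by
      rw [hy, sub_eq_zero] at hcon
      exact hcon
    have hv1K2 : v1 ∈ K2 := this ▸ hK2.smul_mem hv2K ht00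
    have : v1 ∈ K1 ∩ K2 := ⟨hv1K, hv1K2⟩
    rw [hA, Set.mem_singleton_iff] at this
    exact hv10 this
  obtain ⟨n, hz⟩ := exists_pow_mem_interior hd hirr h1 hyK hy0
  have hzeq : (Lop 𝒜 ^ n) y = ((1+lam1)^n) • v1 - ((1+lam2)^n * t0) • v2 := by
    rw [hy, map_sub, _root_.map_smul, Lop_pow_eigen hev1, Lop_pow_eigen hev2]
    module
  have hα : (0:ℝ) < (1+lam1)^n := pow_pos (by linarith) n
  set s : ℝ := ((1+lam1)^n)⁻¹ * ((1+lam2)^n * t0) with hs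
  have hps : ((1+lam1)^n)⁻¹ • ((Lop 𝒜 ^ n) y) = v1 - s • v2 := by
    rw [hzeq, smul_sub, smul_smul, smul_smul, inv_mul_cancel₀ hα.ne', one_smul, hs]
  have hpint : v1 - s • v2 ∈ interior K1 := by
    rw [← hps]
    exact smul_mem_interior hK1 hz (inv_pos.2 hα)
  have hst0 : t0 ≤ s := by
    rw [hs]
    have hpow : (1+lam1)^n ≤ (1+lam2)^n := pow_le_pow_left₀ (by linarith) (by linarith) n
    rw [← div_eq_inv_mul, le_div_iff₀ hα]
    nlinarith
  -- push a bit further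
  obtain ⟨r, hr, hball⟩ := Metric.isOpen_iff.1 isOpen_interior _ hpint
  set ε : ℝ := r / (2 * (‖v2‖ + 1)) with hε
  have hε0 : 0 < ε := by rw [hε]; positivity
  have hmem : v1 - (s + ε) • v2 ∈ K1 := by
    refine interior_subset (hball ?_)
    rw [Metric.mem_ball, dist_eq_norm]
    have heq : v1 - (s + ε) • v2 - (v1 - s • v2) = -(ε • v2) := by
      rw [add_smul]; abel
    rw [heq, norm_neg, norm_smul, Real.norm_eq_abs, abs_of_pos hε0, hε]
    rw [div_mul_eq_mul_div, div_lt_iff₀ (by positivity)]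
    nlinarith [norm_nonneg v2]
  have : s + ε ∈ T := ⟨by linarith, hmem⟩
  have := le_csSup hbdd this
  linarith

lemma no_disjoint (hd : 0 < d) (hirr : IsIrreducibleFamily 𝒜) {K1 K2 : Set (Fin d → ℝ)}
    (h1 : IsInvariantCone 𝒜 K1) (h2 : IsInvariantCone 𝒜 K2)
    (hA : K1 ∩ K2 = {0}) (hB : K1 ∩ (-K2) = {0}) : False := by
  obtain ⟨v1, lam1, hv1K, hv10, hlam1, hev1⟩ := exists_eigenvector hd hirr h1
  obtain ⟨v2, lam2, hv2K, hv20, hlam2, hev2⟩ := exists_eigenvector hd hirr h2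
  rcases le_total lam1 lam2 with hle | hle
  · exact no_disjoint_aux hd hirr h1 h2 hA hB hv1K hv10 hlam1 hev1 hv2K hv20 hlam2 hev2 hle
  · refine no_disjoint_aux hd hirr h2 h1 ?_ ?_ hv2K hv20 hlam2 hev2 hv1K hv10 hlam1 hev1 hle
    · rw [← hA, Set.inter_comm]
    · ext x
      constructor
      · rintro ⟨hx2, hx1⟩
        have : -x ∈ K1 ∩ (-K2) := ⟨by simpa [Set.mem_neg] using hx1,
          by simpa [Set.mem_neg] using hx2⟩
        rw [hB, Set.mem_singleton_iff, neg_eq_zero] at this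
        simpa using this
      · rintro rfl
        exact ⟨h2.1.zero_mem, by simpa [Set.mem_neg] using h1.1.zero_mem⟩

lemma neg_invariant (h : IsInvariantCone 𝒜 K) : IsInvariantCone 𝒜 (-K) := by
  obtain ⟨⟨hc, hcx, hcone, hpt, hint⟩, hAinv⟩ := h
  refine ⟨⟨hc.neg, hcx.neg, ?_, ?_, ?_⟩, ?_⟩
  · intro x hx t ht
    rw [Set.mem_neg] at hx ⊢
    have := hcone (-x) hx t ht
    rwa [smul_neg] at this
  · have h0 : (0 : Fin d → ℝ) ∈ K ∩ (-K) := by rw [hpt]; rfl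
    ext x
    simp only [Set.mem_inter_iff, Set.mem_neg, neg_neg, Set.mem_singleton_iff]
    constructor
    · rintro ⟨hx1, hx2⟩
      have hx : x ∈ K ∩ (-K) := ⟨hx2, by rwa [Set.mem_neg]⟩
      rwa [hpt, Set.mem_singleton_iff] at hx
    · rintro rfl
      exact ⟨by simpa using h0.1, h0.1⟩
  · obtain ⟨x, hx⟩ := hint
    have hmap := (Homeomorph.neg (Fin d → ℝ)).isOpenMap
    refine ⟨-x, mem_interior.2 ⟨(Homeomorph.neg (Fin d → ℝ)) '' interior K, ?_,
      hmap _ isOpen_interior, ⟨x, hx, rfl⟩⟩⟩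
    rintro _ ⟨y, hy, rfl⟩
    rw [Set.mem_neg]
    simpa using interior_subset hy
  · intro i x hx
    rw [Set.mem_neg] at hx ⊢
    have h2 := hAinv i (-x) hx
    have h3 : (𝒜 i).mulVec (-x) = -((𝒜 i).mulVec x) := by
      have := map_neg ((𝒜 i).mulVecLin) x
      simpa [Matrix.mulVecLin_apply] using this
    rwa [h3] at h2

lemma inter_invariant (hirr : IsIrreducibleFamily 𝒜) {K1 K2 : Set (Fin d → ℝ)}
    (h1 : IsInvariantCone 𝒜 K1) (h2 : IsInvariantCone 𝒜 K2) (hne : K1 ∩ K2 ≠ {0}) :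
    IsInvariantCone 𝒜 (K1 ∩ K2) := by
  have hK1 := h1.1
  have hK2 := h2.1
  have h0 : (0 : Fin d → ℝ) ∈ K1 ∩ K2 := ⟨hK1.zero_mem, hK2.zero_mem⟩
  have hinv : ∀ i, ∀ x ∈ K1 ∩ K2, (𝒜 i).mulVec x ∈ K1 ∩ K2 := fun i x hx =>
    ⟨h1.2 i x hx.1, h2.2 i x hx.2⟩
  obtain ⟨v, hv, hv0⟩ : ∃ v ∈ K1 ∩ K2, v ≠ 0 := by
    by_contra hcon
    push_neg at hcon
    apply hne
    apply Set.Subset.antisymm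
    · intro x hx
      by_cases hx0 : x = 0
      · simp [hx0]
      · exact absurd hx0 (fun h => h (hcon x hx))
    · intro x hx
      rw [Set.mem_singleton_iff] at hx
      rw [hx]
      exact h0
  have hconv : Convex ℝ (K1 ∩ K2) := hK1.convex.inter hK2.convex
  refine ⟨⟨hK1.closed.inter hK2.closed, hconv, ?_, ?_, ?_⟩, hinv⟩
  · intro x hx t ht
    exact ⟨hK1.smul_mem hx.1 ht, hK2.smul_mem hx.2 ht⟩
  · apply Set.Subset.antisymm
    · rintro x ⟨⟨hx1, -⟩, hxn⟩
      rw [Set.mem_neg] at hxn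
      rw [Set.mem_singleton_iff]
      exact hK1.eq_zero hx1 hxn.1
    · intro x hx
      rw [Set.mem_singleton_iff] at hx
      subst hx
      exact ⟨h0, by simpa [Set.mem_neg] using h0⟩
  · exact interior_nonempty_of_span hconv h0 (span_eq_top_of_invariant hirr hinv hv hv0)

lemma sInter_invariant (hd : 0 < d) (hirr : IsIrreducibleFamily 𝒜)
    {c : Set (Set (Fin d → ℝ))} (hcS : ∀ K ∈ c, IsInvariantCone 𝒜 K)
    (hchain : IsChain (· ⊆ ·) c) (hcne : c.Nonempty) : IsInvariantCone 𝒜 (⋂₀ c) := by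
  haveI : Nonempty c := hcne.to_subtype
  set t : c → Set (Fin d → ℝ) := fun K => (K : Set (Fin d → ℝ)) ∩ Metric.sphere 0 1 with htdef
  have hdir : Directed (· ⊇ ·) t := by
    intro K K'
    by_cases heq : (K : Set (Fin d → ℝ)) = K'
    · exact ⟨K, Set.Subset.rfl, by rw [htdef]; simp only; rw [heq]⟩
    · rcases hchain.total K.2 K'.2 with h | h
      · exact ⟨K, Set.Subset.rfl, Set.inter_subset_inter_left _ h⟩
      · exact ⟨K', Set.inter_subset_inter_left _ h, Set.Subset.rfl⟩
  have htne : ∀ K : c, (t K).Nonempty := by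
    intro K
    have hP := (hcS K K.2).1
    obtain ⟨q, hq⟩ := hP.int_nonempty
    have hq0 : q ≠ 0 := fun h => zero_not_mem_interior hd hP (h ▸ hq)
    exact ⟨_, hP.smul_mem (interior_subset hq) (inv_nonneg.2 (norm_nonneg q)),
      norm_inv_smul_mem_sphere hq0⟩
  have hcomp : ∀ K : c, IsCompact (t K) := fun K =>
    (isCompact_sphere 0 1).inter_left (hcS K K.2).1.closed
  have hcl : ∀ K : c, IsClosed (t K) := fun K =>
    (hcS K K.2).1.closed.inter (isCompact_sphere 0 1).isClosed
  obtain ⟨v, hv⟩ :=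
    IsCompact.nonempty_iInter_of_directed_nonempty_isCompact_isClosed t hdir htne hcomp hcl
  rw [Set.mem_iInter] at hv
  have hvK : v ∈ ⋂₀ c := Set.mem_sInter.2 fun K hK => (hv ⟨K, hK⟩).1
  have hv0 : v ≠ 0 := by
    obtain ⟨K, hK⟩ := hcne
    have h2 := (hv ⟨K, hK⟩).2
    intro h
    rw [h] at h2
    simp [Metric.mem_sphere, dist_zero_right] at h2
  have h0mem : (0 : Fin d → ℝ) ∈ ⋂₀ c := Set.mem_sInter.2 fun K hK => (hcS K hK).1.zero_mem
  have hinv : ∀ i, ∀ x ∈ ⋂₀ c, (𝒜 i).mulVec x ∈ ⋂₀ c := fun i x hx =>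
    Set.mem_sInter.2 fun K hK => (hcS K hK).2 i x (Set.mem_sInter.1 hx K hK)
  have hconv : Convex ℝ (⋂₀ c) := convex_sInter fun K hK => (hcS K hK).1.convex
  refine ⟨⟨isClosed_sInter fun K hK => (hcS K hK).1.closed, hconv, ?_, ?_, ?_⟩, hinv⟩
  · intro x hx τ hτ
    exact Set.mem_sInter.2 fun K hK => (hcS K hK).1.smul_mem (Set.mem_sInter.1 hx K hK) hτ
  · apply Set.Subset.antisymm
    · obtain ⟨K, hK⟩ := hcne
      rintro x ⟨hx1, hx2⟩
      rw [Set.mem_neg] at hx2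
      rw [Set.mem_singleton_iff]
      exact (hcS K hK).1.eq_zero (Set.mem_sInter.1 hx1 K hK) (Set.mem_sInter.1 hx2 K hK)
    · intro x hx
      rw [Set.mem_singleton_iff] at hx
      subst hx
      exact ⟨h0mem, by simpa [Set.mem_neg] using h0mem⟩
  · exact interior_nonempty_of_span hconv h0mem (span_eq_top_of_invariant hirr hinv hvK hv0)

/-- An irreducible finite family with at least one proper invariant cone has a
minimal invariant cone: a proper invariant cone contained, up to sign, in every
proper invariant cone. -/
theorem exists_minimal_invariant_cone {d m : ℕ} (hm : 0 < m)
    (𝒜 : Fin m → Matrix (Fin d) (Fin d) ℝ)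
    (hirr : IsIrreducibleFamily 𝒜)
    (hex : ∃ K : Set (Fin d → ℝ), IsInvariantCone 𝒜 K) :
    ∃ Kmin : Set (Fin d → ℝ), IsInvariantCone 𝒜 Kmin ∧
      ∀ K' : Set (Fin d → ℝ), IsInvariantCone 𝒜 K' → Kmin ⊆ K' ∨ Kmin ⊆ -K' := by
  rcases Nat.eq_zero_or_pos d with hd | hd
  · subst hd
    refine ⟨{0}, ⟨⟨isClosed_singleton, convex_singleton 0, ?_, ?_, ?_⟩, ?_⟩, ?_⟩
    · intro x hx t ht
      rw [Set.mem_singleton_iff] at hx ⊢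
      rw [hx, smul_zero]
    · simp
    · have huniv : ({0} : Set (Fin 0 → ℝ)) = Set.univ :=
        Set.eq_univ_of_forall fun x => by
          rw [Set.mem_singleton_iff]
          exact Subsingleton.elim x 0
      rw [huniv, interior_univ]
      exact ⟨0, Set.mem_univ 0⟩
    · intro i x _
      rw [Set.mem_singleton_iff]
      exact Subsingleton.elim _ 0
    · intro K' hK'
      left
      intro x hx
      rw [Set.mem_singleton_iff] at hx
      rw [hx]
      exact hK'.1.zero_mem
  · obtain ⟨K₀, hK₀⟩ := hex
    obtain ⟨Kmin, -, hKmin⟩ :=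
      zorn_superset_nonempty {K : Set (Fin d → ℝ) | IsInvariantCone 𝒜 K}
        (fun c hcS hchain hcne =>
          ⟨⋂₀ c, sInter_invariant hd hirr (fun K hK => hcS hK) hchain hcne,
            fun s hs => Set.sInter_subset_of_mem hs⟩) K₀ hK₀
    refine ⟨Kmin, hKmin.prop, ?_⟩
    intro K' hK'
    by_cases hA : Kmin ∩ K' = {0}
    · by_cases hB : Kmin ∩ (-K') = {0}
      · exact absurd (no_disjoint hd hirr hKmin.prop hK' hA hB) not_false
      · right
        have hN : IsInvariantCone 𝒜 (Kmin ∩ (-K')) :=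
          inter_invariant hirr hKmin.prop (neg_invariant hK') hB
        have hsub : Kmin ∩ (-K') ⊆ Kmin := Set.inter_subset_left
        have hge : Kmin ⊆ Kmin ∩ (-K') := hKmin.2 hN hsub
        exact hge.trans Set.inter_subset_right
    · left
      have hN : IsInvariantCone 𝒜 (Kmin ∩ K') := inter_invariant hirr hKmin.prop hK' hA
      have hsub : Kmin ∩ K' ⊆ Kmin := Set.inter_subset_left
      have hge : Kmin ⊆ Kmin ∩ K' := hKmin.2 hN hsub
      exact hge.trans Set.inter_subset_right
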